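/- arXiv:2302.02361 — 4 statements merged into one kernel-verified Lean document; each statement's English description precedes it below -/
import Mathlib

section
/- For any vectors u, v in ℝ², with f(w) := (|w|² − 1)w, it holds that (u − v)·f(u) ≥ (1/4)(|u|⁴ − |v|⁴) − (1/2)(|u|² − |v|²) − (1/2)|u − v|². -/
theorem stmt0 (u v : EuclideanSpace ℝ (Fin 2)) :
    (inner ℝ (u - v) ((‖u‖ ^ 2 - 1) • u) : ℝ) ≥
      (1 / 4) * (‖u‖ ^ 4 - ‖v‖ ^ 4) - (1 / 2) * (‖u‖ ^ 2 - ‖v‖ ^ 2)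
        - (1 / 2) * ‖u - v‖ ^ 2 := by
  have h1 : (inner ℝ (u - v) ((‖u‖ ^ 2 - 1) • u) : ℝ)
      = (‖u‖ ^ 2 - 1) * (‖u‖ ^ 2 - inner ℝ u v) := by
    rw [real_inner_smul_right, inner_sub_left, real_inner_self_eq_norm_sq,
      real_inner_comm v u]
  have h2 : ‖u - v‖ ^ 2 = ‖u‖ ^ 2 - 2 * inner ℝ u v + ‖v‖ ^ 2 :=
    norm_sub_sq_real u v
  have h3 : (inner ℝ u v : ℝ) ≤ ‖u‖ * ‖v‖ := real_inner_le_norm u v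
  have hu : (0:ℝ) ≤ ‖u‖ := norm_nonneg u
  have hv : (0:ℝ) ≤ ‖v‖ := norm_nonneg v
  rw [h1, ge_iff_le]
  nlinarith [sq_nonneg (‖u‖ - ‖v‖), sq_nonneg (‖u‖ + ‖v‖),
    sq_nonneg (‖u‖ ^ 2 - ‖v‖ ^ 2), sq_nonneg (‖u‖ ^ 2 - ‖u‖ * ‖v‖),
    mul_nonneg (mul_nonneg hu hu) (sq_nonneg (‖u‖ - ‖v‖)),
    mul_nonneg hu hv]
end

section
/- For any vectors u, v in ℝ² and z := u − v, with f(w) := (|w|² − 1)w, it holds that z·(f(u) − f(v)) ≥ (1/2)|v|²|z|² + (1/2)(u·z)² − |z|². -/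
theorem stmt1 (u v : EuclideanSpace ℝ (Fin 2)) :
    (inner ℝ (u - v) ((‖u‖ ^ 2 - 1) • u - (‖v‖ ^ 2 - 1) • v) : ℝ) ≥
      (1 / 2) * ‖v‖ ^ 2 * ‖u - v‖ ^ 2 + (1 / 2) * (inner ℝ u (u - v) : ℝ) ^ 2
        - ‖u - v‖ ^ 2 := by
  have hcs := real_inner_mul_inner_self_le u v
  have huu : (inner ℝ u u : ℝ) = ‖u‖ ^ 2 := real_inner_self_eq_norm_sq u
  have hvv : (inner ℝ v v : ℝ) = ‖v‖ ^ 2 := real_inner_self_eq_norm_sq v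
  have hz : ‖u - v‖ ^ 2 = (inner ℝ (u - v) (u - v) : ℝ) :=
    (real_inner_self_eq_norm_sq _).symm
  have hcomm : (inner ℝ u v : ℝ) = inner ℝ v u := real_inner_comm v u
  simp only [inner_sub_left, inner_sub_right, inner_smul_right, hz, huu, hvv, hcomm] at *
  nlinarith [hcs, sq_nonneg (‖u‖ ^ 2 - ‖v‖ ^ 2)]
end

section
/- With the BDF2 kernels b and DOC kernels θ as defined by the discrete orthogonality identity ∑_{j=k}^n θ_{n−j}^{(n)} b_{j−k}^{(j)} = δ_{nk}, for any sequence (v^j)_{j=0}^n in a vector space, one has ∑_{j=1}^n θ_{n−j}^{(n)} D_2 v^j = v^n − v^{n−1}, where D_2 v^j := ∑_{k=1}^j b_{j−k}^{(j)} (v^k − v^{k−1}). -/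
/-- With the DOC orthogonality identity, the DOC-weighted sum of the BDF2 differences
`D₂ v^j = ∑_{k=1}^j b_{j-k}^{(j)} (v^k - v^{k-1})` telescopes to `v^n - v^{n-1}`. -/
theorem stmt8 (E : Type*) [AddCommGroup E] [Module ℝ E] (n : ℕ) (hn : 1 ≤ n)
    (b θ : ℕ → ℕ → ℝ)
    (horth : ∀ k, 1 ≤ k → k ≤ n →
      ∑ j ∈ Finset.Icc k n, θ n j * b j k = if n = k then 1 else 0)
    (v : ℕ → E) :
    ∑ j ∈ Finset.Icc 1 n, θ n j • (∑ k ∈ Finset.Icc 1 j, b j k • (v k - v (k - 1)))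
      = v n - v (n - 1) := by
  have hswap :
      ∑ j ∈ Finset.Icc 1 n, ∑ k ∈ Finset.Icc 1 j,
          (θ n j * b j k) • (v k - v (k - 1))
        = ∑ k ∈ Finset.Icc 1 n, ∑ j ∈ Finset.Icc k n,
          (θ n j * b j k) • (v k - v (k - 1)) := by
    apply Finset.sum_comm'
    intro j k
    simp only [Finset.mem_Icc]
    omega
  calc ∑ j ∈ Finset.Icc 1 n, θ n j • (∑ k ∈ Finset.Icc 1 j, b j k • (v k - v (k - 1)))
      = ∑ j ∈ Finset.Icc 1 n, ∑ k ∈ Finset.Icc 1 j,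
          (θ n j * b j k) • (v k - v (k - 1)) := by
        refine Finset.sum_congr rfl fun j _ => ?_
        rw [Finset.smul_sum]
        exact Finset.sum_congr rfl fun k _ => (mul_smul _ _ _).symm
    _ = ∑ k ∈ Finset.Icc 1 n, ∑ j ∈ Finset.Icc k n,
          (θ n j * b j k) • (v k - v (k - 1)) := hswap
    _ = ∑ k ∈ Finset.Icc 1 n, (if n = k then (1:ℝ) else 0) • (v k - v (k - 1)) := by
        refine Finset.sum_congr rfl fun k hk => ?_
        rw [Finset.mem_Icc] at hk
        rw [← Finset.sum_smul, horth k hk.1 hk.2]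
    _ = v n - v (n - 1) := by
        simp only [ite_smul, one_smul, zero_smul]
        rw [Finset.sum_ite_eq]
        simp [hn]
end

section
/- Let 0 < r_j ≤ r_s for all j and define the scaled DOC coefficients θ̃_{k−j}^{(k)} = ((1+r_j)/(1+2r_j)) ∏_{i=j+1}^k r_i^{3/2}/(1+2r_i) for 1 ≤ j ≤ k. If m_* := r_s^{3/2}/(1+2r_s) < 1, then for every 1 ≤ k ≤ n, ∑_{j=1}^k θ̃_{k−j}^{(k)} + ∑_{j=k}^{n} θ̃_{j−k}^{(j)} < 2/(1 − m_*). -/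
-- monotonicity of x^{3/2}/(1+2x)
lemma aux_mono (r_s x : ℝ) (hx : 0 < x) (hxr : x ≤ r_s) :
    x ^ ((3:ℝ)/2) / (1 + 2*x) ≤ r_s ^ ((3:ℝ)/2) / (1 + 2*r_s) := by
  have hrs : 0 < r_s := lt_of_lt_of_le hx hxr
  rw [div_le_div_iff₀ (by linarith) (by linarith)]
  set a := x ^ ((1:ℝ)/2) with ha
  set b := r_s ^ ((1:ℝ)/2) with hb
  have ha0 : 0 ≤ a := Real.rpow_nonneg hx.le _
  have hb0 : 0 ≤ b := Real.rpow_nonneg hrs.le _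
  have hab : a ≤ b := Real.rpow_le_rpow hx.le hxr (by norm_num)
  have hax : a * a = x := by
    rw [ha, ← Real.rpow_add hx]; norm_num
  have hbx : b * b = r_s := by
    rw [hb, ← Real.rpow_add hrs]; norm_num
  have hax3 : x ^ ((3:ℝ)/2) = a * a * a := by
    rw [ha, ← Real.rpow_add hx, ← Real.rpow_add hx]; norm_num
  have hbx3 : r_s ^ ((3:ℝ)/2) = b * b * b := by
    rw [hb, ← Real.rpow_add hrs, ← Real.rpow_add hrs]; norm_num
  rw [hax3, hbx3, ← hax, ← hbx]
  nlinarith [mul_nonneg ha0 hb0, mul_nonneg (mul_nonneg ha0 ha0) hb0,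
    mul_nonneg (mul_nonneg (mul_nonneg ha0 ha0) hb0) hb0, sq_nonneg (a - b),
    sq_nonneg (a*b)]

theorem stmt9 (n : ℕ) (r_s : ℝ) (hrs : 0 < r_s)
    (r : ℕ → ℝ) (hr : ∀ j, 1 ≤ j → j ≤ n → 0 < r j ∧ r j ≤ r_s)
    (hm : r_s ^ ((3 : ℝ) / 2) / (1 + 2 * r_s) < 1)
    (θ : ℕ → ℕ → ℝ)
    (hθ : ∀ k j, 1 ≤ j → j ≤ k → k ≤ n →
      θ k j = ((1 + r j) / (1 + 2 * r j))
        * ∏ i ∈ Finset.Icc (j + 1) k, (r i) ^ ((3 : ℝ) / 2) / (1 + 2 * r i)) :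
    ∀ k, 1 ≤ k → k ≤ n →
      (∑ j ∈ Finset.Icc 1 k, θ k j) + (∑ j ∈ Finset.Icc k n, θ j k)
        < 2 / (1 - r_s ^ ((3 : ℝ) / 2) / (1 + 2 * r_s)) := by
  intro k hk hkn
  set M := r_s ^ ((3:ℝ)/2) / (1 + 2*r_s) with hM
  have hM0 : 0 < M := div_pos (Real.rpow_pos_of_pos hrs _) (by linarith)
  have hM1 : M < 1 := hm
  -- per-term bound
  have hterm : ∀ k' j, 1 ≤ j → j ≤ k' → k' ≤ n → θ k' j ≤ M ^ (k' - j) := by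
    intro k' j hj hjk hk'n
    rw [hθ k' j hj hjk hk'n]
    have hrj := hr j hj (hjk.trans hk'n)
    have hA : (1 + r j)/(1 + 2*r j) ≤ 1 := by
      rw [div_le_one (by linarith [hrj.1])]; linarith [hrj.1]
    have hA0 : 0 ≤ (1 + r j)/(1 + 2*r j) :=
      div_nonneg (by linarith [hrj.1]) (by linarith [hrj.1])
    have hfac : ∀ i ∈ Finset.Icc (j+1) k', 0 < r i ∧ r i ≤ r_s := by
      intro i hi
      rw [Finset.mem_Icc] at hi
      exact hr i (le_trans (Nat.le_add_left 1 j) hi.1) (hi.2.trans hk'n)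
    have hprod : (∏ i ∈ Finset.Icc (j+1) k', (r i) ^ ((3:ℝ)/2) / (1 + 2*r i))
        ≤ M ^ (k' - j) := by
      have h1 : (∏ i ∈ Finset.Icc (j+1) k', (r i) ^ ((3:ℝ)/2) / (1 + 2*r i))
          ≤ ∏ _i ∈ Finset.Icc (j+1) k', M := by
        apply Finset.prod_le_prod
        · intro i hi
          exact div_nonneg (Real.rpow_nonneg (hfac i hi).1.le _)
            (by linarith [(hfac i hi).1])
        · intro i hi
          exact aux_mono r_s (r i) (hfac i hi).1 (hfac i hi).2
      rw [Finset.prod_const, Nat.card_Icc] at h1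
      simpa using h1
    have hprod0 : 0 ≤ ∏ i ∈ Finset.Icc (j+1) k', (r i) ^ ((3:ℝ)/2) / (1 + 2*r i) :=
      Finset.prod_nonneg fun i hi =>
        div_nonneg (Real.rpow_nonneg (hfac i hi).1.le _) (by linarith [(hfac i hi).1])
    calc ((1 + r j)/(1 + 2*r j)) * ∏ i ∈ Finset.Icc (j+1) k', (r i) ^ ((3:ℝ)/2) / (1 + 2*r i)
        ≤ 1 * M ^ (k' - j) := mul_le_mul hA hprod hprod0 one_pos.le
      _ = M ^ (k' - j) := one_mul _
  -- geometric sum bound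
  have hgeom : ∀ N : ℕ, (∑ i ∈ Finset.range N, M ^ i) < 1 / (1 - M) := by
    intro N
    have h1M : (0:ℝ) < 1 - M := by linarith
    rw [geom_sum_eq hM1.ne]
    have heq : (M ^ N - 1)/(M - 1) = (1 - M ^ N)/(1 - M) := by
      rw [div_eq_div_iff (by linarith) (by linarith)]; ring
    rw [heq, div_lt_div_iff₀ h1M h1M]
    nlinarith [pow_pos hM0 N]
  -- first sum
  have hS1 : (∑ j ∈ Finset.Icc 1 k, θ k j) < 1 / (1 - M) := by
    have h1 : (∑ j ∈ Finset.Icc 1 k, θ k j) ≤ ∑ j ∈ Finset.Icc 1 k, M ^ (k - j) := by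
      apply Finset.sum_le_sum
      intro j hj
      rw [Finset.mem_Icc] at hj
      exact hterm k j hj.1 hj.2 hkn
    have h2 : (∑ j ∈ Finset.Icc 1 k, M ^ (k - j)) = ∑ i ∈ Finset.range k, M ^ i := by
      rw [← Finset.Ico_add_one_right_eq_Icc, Finset.sum_Ico_eq_sum_range]
      have hk' : k + 1 - 1 = k := by omega
      rw [hk']
      rw [← Finset.sum_range_reflect (fun i => M ^ i) k]
      apply Finset.sum_congr rfl
      intro i hi
      rw [Finset.mem_range] at hi
      congr 1
      omega
    calc (∑ j ∈ Finset.Icc 1 k, θ k j) ≤ ∑ i ∈ Finset.range k, M ^ i := h2 ▸ h1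
      _ < 1 / (1 - M) := hgeom k
  -- second sum
  have hS2 : (∑ j ∈ Finset.Icc k n, θ j k) < 1 / (1 - M) := by
    have h1 : (∑ j ∈ Finset.Icc k n, θ j k) ≤ ∑ j ∈ Finset.Icc k n, M ^ (j - k) := by
      apply Finset.sum_le_sum
      intro j hj
      rw [Finset.mem_Icc] at hj
      exact hterm j k hk hj.1 hj.2
    have h2 : (∑ j ∈ Finset.Icc k n, M ^ (j - k)) = ∑ i ∈ Finset.range (n + 1 - k), M ^ i := by
      rw [← Finset.Ico_add_one_right_eq_Icc, Finset.sum_Ico_eq_sum_range]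
      apply Finset.sum_congr rfl
      intro i hi
      congr 1
      omega
    calc (∑ j ∈ Finset.Icc k n, θ j k) ≤ ∑ i ∈ Finset.range (n + 1 - k), M ^ i := h2 ▸ h1
      _ < 1 / (1 - M) := hgeom _
  have h2M : 2 / (1 - M) = 1 / (1 - M) + 1 / (1 - M) := by ring
  rw [h2M]
  exact add_lt_add hS1 hS2
end
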